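/- Let n = 4k ≥ 20 be an integer divisible by four and let G be a complete edge-colored graph with coloring γ in which no n-cycle is rainbow. Suppose G contains a rainbow (3n−10)-cycle v_0 → v_1 → ⋯ → v_{3n−11} → v_0 with (pairwise distinct) edge colors c_i = γ(v_i, v_{i+1}), all indices taken modulo 3n−10, and suppose that γ(v_i, v_{i+n−1}) ∈ {c_i, c_{i+1}, c_{i+2}} and γ(v_i, v_{i+n−7}) ∈ {c_{i+n−7}, c_{i+n−6}, c_{i+n−5}} for every i. Then γ(v_i, v_{i+13}) ∈ {c_i, c_{i+1}, c_{i+2}} for every i modulo 3n−10. -/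
import Mathlib


/-- A rainbow `m`-cycle in the complete graph on `V` edge-colored by `γ`:
pairwise distinct vertices `v i` (`i` mod `m`) with pairwise distinct edge colors
`γ (v i) (v (i+1))`. -/
def RainbowCycle {V C : Type*} (γ : V → V → C) (m : ℕ) (v : ZMod m → V) : Prop :=
  Function.Injective v ∧ Function.Injective (fun i : ZMod m => γ (v i) (v (i + 1)))

private lemma natCast_inj_lt {m : ℕ} [NeZero m] {a b : ℕ} (ha : a < m) (hb : b < m)
    (h : (a : ZMod m) = b) : a = b := by
  have := congrArg ZMod.val h
  rwa [ZMod.val_natCast_of_lt ha, ZMod.val_natCast_of_lt hb] at this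

private lemma cast_succ {m : ℕ} (i : ZMod m) (T : ℕ) :
    i + ((T + 1 : ℕ) : ZMod m) = i + (T : ZMod m) + 1 := by push_cast; ring

/-- offsets of cycle A -/
private def wA (k : ℕ) (a : ℕ) : ℕ :=
  if a = 0 then 0 else if a ≤ 2*k-4 then a+12 else if a ≤ 4*k-6 then 8*k-2-a else 4*k-a

/-- offsets of cycle B -/
private def wB (k : ℕ) (a : ℕ) : ℕ :=
  if a = 0 then 0 else if a ≤ 6 then 14-a else if a = 7 then 4*k+1
  else if a = 8 then 8*k-6 else if a ≤ 4*k-1 then 12*k-4-a else 0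

private def PA (k a o : ℕ) : Prop :=
  (1 ≤ a ∧ a ≤ 2*k-5 ∧ o = a+12)
  ∨ (a = 2*k-4 ∧ (o = 6*k+1 ∨ o = 6*k+2 ∨ o = 6*k+3))
  ∨ (2*k-3 ≤ a ∧ a ≤ 4*k-7 ∧ o = 8*k-3-a)
  ∨ (a = 4*k-6 ∧ (o = 5 ∨ o = 6 ∨ o = 7))
  ∨ (4*k-5 ≤ a ∧ a ≤ 4*k-1 ∧ o = 4*k-1-a)

private def PB (k a o : ℕ) : Prop :=
  (1 ≤ a ∧ a ≤ 5 ∧ o = 13-a)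
  ∨ (a = 6 ∧ (o = 4*k+1 ∨ o = 4*k+2 ∨ o = 4*k+3))
  ∨ (a = 7 ∧ (o = 8*k-6 ∨ o = 8*k-5 ∨ o = 8*k-4))
  ∨ (a = 8 ∧ (o = 12*k-13 ∨ o = 12*k-12 ∨ o = 12*k-11))
  ∨ (9 ≤ a ∧ a ≤ 4*k-2 ∧ o = 12*k-5-a)
  ∨ (a = 4*k-1 ∧ (o = 0 ∨ o = 1 ∨ o = 2))

private lemma force {V C : Type*} (γ : V → V → C) (n : ℕ) (hn : 20 ≤ n)
    (hno : ∀ u : ZMod n → V, ¬ RainbowCycle γ n u)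
    (v : ZMod (3*n-10) → V) (hv : RainbowCycle γ (3*n-10) v)
    (c : ZMod (3*n-10) → C) (hc : ∀ i, c i = γ (v i) (v (i+1)))
    (i : ZMod (3*n-10)) (w : ℕ → ℕ) (P : ℕ → ℕ → Prop)
    (hw0 : w 0 = 0) (hw1 : w 1 = 13) (hwn : w n = 0)
    (hwlt : ∀ a, a ≤ n → w a < 3*n-10)
    (hinj : ∀ a b, a < n → b < n → w a = w b → a = b)
    (hclass : ∀ a, 1 ≤ a → a < n → ∃ o, o < 3*n-10 ∧ P a o ∧
       γ (v (i + (w a : ZMod (3*n-10)))) (v (i + (w (a+1) : ZMod (3*n-10)))) =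
         c (i + (o : ZMod (3*n-10))))
    (hdisj : ∀ a b o, P a o → P b o → a = b) :
    ∃ o, o < 3*n-10 ∧ (∃ a, 1 ≤ a ∧ a < n ∧ P a o) ∧
      γ (v i) (v (i + 13)) = c (i + (o : ZMod (3*n-10))) := by
  haveI : NeZero n := ⟨by omega⟩
  haveI : NeZero (3*n-10) := ⟨by omega⟩
  have hcinj : Function.Injective c := by
    have h := hv.2
    have he : (fun j : ZMod (3*n-10) => γ (v j) (v (j+1))) = c := by
      funext x; exact (hc x).symm
    rwa [he] at h
  set u : ZMod n → V := fun j => v (i + (w j.val : ZMod (3*n-10))) with hu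
  have hui : Function.Injective u := by
    intro a b hab
    have h2 := hv.1 hab
    have h3 : ((w a.val : ℕ) : ZMod (3*n-10)) = ((w b.val : ℕ) : ZMod (3*n-10)) := by
      exact add_left_cancel h2
    have h4 : w a.val = w b.val :=
      natCast_inj_lt (hwlt _ (le_of_lt (ZMod.val_lt a))) (hwlt _ (le_of_lt (ZMod.val_lt b))) h3
    have h5 : a.val = b.val := hinj _ _ (ZMod.val_lt a) (ZMod.val_lt b) h4
    have := congrArg (fun x : ℕ => (x : ZMod n)) h5
    simpa [ZMod.natCast_val, ZMod.cast_id] using this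
  have hkey : ∀ j : ZMod n, u (j+1) = v (i + (w (j.val + 1) : ZMod (3*n-10))) := by
    intro j
    by_cases h : j.val + 1 < n
    · have hval : (j+1).val = j.val + 1 := by
        have h1 : j + 1 = ((j.val + 1 : ℕ) : ZMod n) := by
          push_cast [ZMod.natCast_val, ZMod.cast_id]; ring
        rw [h1, ZMod.val_natCast_of_lt h]
      simp only [hu]; rw [hval]
    · have hvn : j.val + 1 = n := by have := ZMod.val_lt j; omega
      have h1 : j + 1 = 0 := by
        have h2 : j + 1 = ((j.val + 1 : ℕ) : ZMod n) := by
          push_cast [ZMod.natCast_val, ZMod.cast_id]; ring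
        rw [h2, hvn, ZMod.natCast_self]
      rw [h1]
      simp only [hu]
      rw [hvn, hwn]
      simp [hw0]
  have hnr : ¬ Function.Injective (fun j : ZMod n => γ (u j) (u (j+1))) :=
    fun h => hno u ⟨hui, h⟩
  rw [Function.not_injective_iff] at hnr
  obtain ⟨a, b, heq, hne⟩ := hnr
  have hedge : ∀ j : ZMod n, γ (u j) (u (j+1)) =
      γ (v (i + (w j.val : ZMod (3*n-10)))) (v (i + (w (j.val + 1) : ZMod (3*n-10)))) := by
    intro j; rw [hkey j]
  have hzero : ∀ j : ZMod n, j = 0 →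
      γ (u j) (u (j+1)) = γ (v i) (v (i + 13)) := by
    intro j hj
    rw [hedge j, hj]
    have : (0 : ZMod n).val = 0 := ZMod.val_zero
    rw [this, hw0, hw1]
    norm_num
  have hcls : ∀ j : ZMod n, j ≠ 0 → ∃ o, o < 3*n-10 ∧ P j.val o ∧
      γ (u j) (u (j+1)) = c (i + (o : ZMod (3*n-10))) := by
    intro j hj
    have h1 : 1 ≤ j.val := by
      rcases Nat.eq_zero_or_pos j.val with h | h
      · exfalso; apply hj
        have := congrArg (fun x : ℕ => (x : ZMod n)) h
        simpa [ZMod.natCast_val, ZMod.cast_id] using this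
      · exact h
    obtain ⟨o, ho1, ho2, ho3⟩ := hclass j.val h1 (ZMod.val_lt j)
    exact ⟨o, ho1, ho2, by rw [hedge j]; exact ho3⟩
  by_cases ha : a = 0
  · by_cases hb : b = 0
    · exact absurd (ha.trans hb.symm) hne
    · obtain ⟨o, ho1, ho2, ho3⟩ := hcls b hb
      refine ⟨o, ho1, ⟨b.val, ?_, ZMod.val_lt b, ho2⟩, ?_⟩
      · rcases Nat.eq_zero_or_pos b.val with h | h
        · exfalso; apply hb
          have := congrArg (fun x : ℕ => (x : ZMod n)) h
          simpa [ZMod.natCast_val, ZMod.cast_id] using this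
        · exact h
      · rw [← hzero a ha, heq, ho3]
  · by_cases hb : b = 0
    · obtain ⟨o, ho1, ho2, ho3⟩ := hcls a ha
      refine ⟨o, ho1, ⟨a.val, ?_, ZMod.val_lt a, ho2⟩, ?_⟩
      · rcases Nat.eq_zero_or_pos a.val with h | h
        · exfalso; apply ha
          have := congrArg (fun x : ℕ => (x : ZMod n)) h
          simpa [ZMod.natCast_val, ZMod.cast_id] using this
        · exact h
      · rw [← hzero b hb, ← heq, ho3]
    · exfalso
      obtain ⟨o, ho1, ho2, ho3⟩ := hcls a ha
      obtain ⟨o', ho1', ho2', ho3'⟩ := hcls b hb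
      rw [ho3, ho3'] at heq
      have h4 := hcinj heq
      have h5 : ((o : ℕ) : ZMod (3*n-10)) = ((o' : ℕ) : ZMod (3*n-10)) := add_left_cancel h4
      have h6 : o = o' := natCast_inj_lt ho1 ho1' h5
      subst h6
      have h7 : a.val = b.val := hdisj _ _ _ ho2 ho2'
      apply hne
      have := congrArg (fun x : ℕ => (x : ZMod n)) h7
      simpa [ZMod.natCast_val, ZMod.cast_id] using this


set_option maxHeartbeats 2000000 in
/-- If `n = 4k ≥ 20`, no `n`-cycle is rainbow, `v` is a rainbow `(3n-10)`-cycle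
with colors `c i = γ (v i) (v (i+1))`, `γ (v i) (v (i+n-1)) ∈ {c i, c (i+1), c (i+2)}` and
`γ (v i) (v (i+n-7)) ∈ {c (i+n-7), c (i+n-6), c (i+n-5)}` for every `i`, then
`γ (v i) (v (i+13)) ∈ {c i, c (i+1), c (i+2)}` for every `i`. -/
theorem stmt9 {V C : Type*} (γ : V → V → C) (hsymm : ∀ x y, γ x y = γ y x)
    (n k : ℕ) (hk : n = 4 * k) (hn : 20 ≤ n)
    (hno : ∀ u : ZMod n → V, ¬ RainbowCycle γ n u)
    (v : ZMod (3 * n - 10) → V) (hv : RainbowCycle γ (3 * n - 10) v)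
    (c : ZMod (3 * n - 10) → C) (hc : ∀ i, c i = γ (v i) (v (i + 1)))
    (h1 : ∀ i, γ (v i) (v (i + ((n - 1 : ℕ) : ZMod (3 * n - 10)))) ∈
      ({c i, c (i + 1), c (i + 2)} : Set C))
    (h2 : ∀ i, γ (v i) (v (i + ((n - 7 : ℕ) : ZMod (3 * n - 10)))) ∈
      ({c (i + ((n - 7 : ℕ) : ZMod (3 * n - 10))),
        c (i + ((n - 6 : ℕ) : ZMod (3 * n - 10))),
        c (i + ((n - 5 : ℕ) : ZMod (3 * n - 10)))} : Set C)) :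
    ∀ i, γ (v i) (v (i + 13)) ∈ ({c i, c (i + 1), c (i + 2)} : Set C) := by
  intro i
  have hk5 : 5 ≤ k := by omega
  haveI : NeZero (3*n-10) := ⟨by omega⟩
  -- scheme A
  have HA := force γ n hn hno v hv c hc i (wA k) (PA k)
    (by simp [wA])
    (by simp only [wA]; split_ifs <;> first | contradiction | omega)
    (by simp only [wA]; split_ifs <;> first | contradiction | omega)
    (by intro a ha; simp only [wA]; split_ifs <;> first | contradiction | omega)
    (by intro a b ha hb h; simp only [wA] at h; split_ifs at h <;> omega)
    ?classA
    (by intro a b o hPa hPb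
        unfold PA at hPa hPb
        rcases hPa with ⟨x1,x2,x3⟩|⟨x1,x2|x2|x2⟩|⟨x1,x2,x3⟩|⟨x1,x2|x2|x2⟩|⟨x1,x2,x3⟩ <;>
          rcases hPb with ⟨y1,y2,y3⟩|⟨y1,y2|y2|y2⟩|⟨y1,y2,y3⟩|⟨y1,y2|y2|y2⟩|⟨y1,y2,y3⟩ <;>
          omega)
  case classA =>
    intro a ha1 ha2
    by_cases c1 : a ≤ 2*k-5
    · -- forward path 1
      have e1 : wA k a = a + 12 := by simp only [wA]; split_ifs <;> first | contradiction | omega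
      have e2 : wA k (a+1) = (a+12) + 1 := by simp only [wA]; split_ifs <;> first | contradiction | omega
      refine ⟨a+12, by omega, Or.inl ⟨ha1, c1, rfl⟩, ?_⟩
      rw [e1, e2, cast_succ i (a+12), hc]
    · by_cases c2 : a = 2*k-4
      · -- chord H2+ : (2k+8) → (6k+1)
        subst c2
        have e1 : wA k (2*k-4) = 2*k+8 := by simp only [wA]; split_ifs <;> first | contradiction | omega
        have e2 : wA k (2*k-4+1) = 6*k+1 := by simp only [wA]; split_ifs <;> first | contradiction | omega
        rw [e1, e2]
        have hch := h2 (i + ((2*k+8 : ℕ) : ZMod (3*n-10)))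
        have harg7 : (i + ((2*k+8:ℕ) : ZMod (3*n-10))) + ((n-7 : ℕ) : ZMod (3*n-10))
            = i + ((6*k+1 : ℕ) : ZMod (3*n-10)) := by
          rw [add_assoc, ← Nat.cast_add, show (2*k+8) + (n-7) = 6*k+1 from by omega]
        have harg6 : (i + ((2*k+8:ℕ) : ZMod (3*n-10))) + ((n-6 : ℕ) : ZMod (3*n-10))
            = i + ((6*k+2 : ℕ) : ZMod (3*n-10)) := by
          rw [add_assoc, ← Nat.cast_add, show (2*k+8) + (n-6) = 6*k+2 from by omega]
        have harg5 : (i + ((2*k+8:ℕ) : ZMod (3*n-10))) + ((n-5 : ℕ) : ZMod (3*n-10))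
            = i + ((6*k+3 : ℕ) : ZMod (3*n-10)) := by
          rw [add_assoc, ← Nat.cast_add, show (2*k+8) + (n-5) = 6*k+3 from by omega]
        rw [harg7, harg6, harg5] at hch
        simp only [Set.mem_insert_iff, Set.mem_singleton_iff] at hch
        rcases hch with h | h | h
        · exact ⟨6*k+1, by omega, Or.inr (Or.inl ⟨rfl, Or.inl rfl⟩), h⟩
        · exact ⟨6*k+2, by omega, Or.inr (Or.inl ⟨rfl, Or.inr (Or.inl rfl)⟩), h⟩
        · exact ⟨6*k+3, by omega, Or.inr (Or.inl ⟨rfl, Or.inr (Or.inr rfl)⟩), h⟩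
      · by_cases c3 : a ≤ 4*k-7
        · -- backward path 2
          have e1 : wA k a = (8*k-3-a) + 1 := by simp only [wA]; split_ifs <;> first | contradiction | omega
          have e2 : wA k (a+1) = 8*k-3-a := by simp only [wA]; split_ifs <;> first | contradiction | omega
          refine ⟨8*k-3-a, by omega, Or.inr (Or.inr (Or.inl ⟨by omega, c3, rfl⟩)), ?_⟩
          rw [e1, e2, cast_succ i (8*k-3-a), hsymm, hc]
        · by_cases c4 : a = 4*k-6
          · -- chord H1 (tail 5, head 4k+4), traversed head→tail
            subst c4
            have e1 : wA k (4*k-6) = 4*k+4 := by simp only [wA]; split_ifs <;> first | contradiction | omega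
            have e2 : wA k (4*k-6+1) = 5 := by simp only [wA]; split_ifs <;> first | contradiction | omega
            rw [e1, e2, hsymm]
            have hch := h1 (i + ((5 : ℕ) : ZMod (3*n-10)))
            have harg : (i + ((5:ℕ) : ZMod (3*n-10))) + ((n-1 : ℕ) : ZMod (3*n-10))
                = i + ((4*k+4 : ℕ) : ZMod (3*n-10)) := by
              rw [add_assoc, ← Nat.cast_add, show 5 + (n-1) = 4*k+4 from by omega]
            have h6 : (i + ((5:ℕ) : ZMod (3*n-10))) + 1 = i + ((6:ℕ) : ZMod (3*n-10)) := by
              push_cast; ring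
            have h7 : (i + ((5:ℕ) : ZMod (3*n-10))) + 2 = i + ((7:ℕ) : ZMod (3*n-10)) := by
              push_cast; ring
            rw [harg, h6, h7] at hch
            simp only [Set.mem_insert_iff, Set.mem_singleton_iff] at hch
            rcases hch with h | h | h
            · exact ⟨5, by omega, Or.inr (Or.inr (Or.inr (Or.inl ⟨rfl, Or.inl rfl⟩))), h⟩
            · exact ⟨6, by omega, Or.inr (Or.inr (Or.inr (Or.inl ⟨rfl, Or.inr (Or.inl rfl)⟩))), h⟩
            · exact ⟨7, by omega, Or.inr (Or.inr (Or.inr (Or.inl ⟨rfl, Or.inr (Or.inr rfl)⟩))), h⟩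
          · -- backward path 3
            have e1 : wA k a = (4*k-1-a) + 1 := by simp only [wA]; split_ifs <;> first | contradiction | omega
            have e2 : wA k (a+1) = 4*k-1-a := by simp only [wA]; split_ifs <;> first | contradiction | omega
            refine ⟨4*k-1-a, by omega,
              Or.inr (Or.inr (Or.inr (Or.inr ⟨by omega, by omega, rfl⟩))), ?_⟩
            rw [e1, e2, cast_succ i (4*k-1-a), hsymm, hc]
  -- scheme B
  have HB := force γ n hn hno v hv c hc i (wB k) (PB k)
    (by simp [wB])
    (by simp only [wB]; split_ifs <;> first | contradiction | omega)
    (by simp only [wB]; split_ifs <;> first | contradiction | omega)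
    (by intro a ha; simp only [wB]; split_ifs <;> first | contradiction | omega)
    (by intro a b ha hb h; simp only [wB] at h; split_ifs at h <;> omega)
    ?classB
    (by intro a b o hPa hPb
        unfold PB at hPa hPb
        rcases hPa with ⟨x1,x2,x3⟩|⟨x1,x2|x2|x2⟩|⟨x1,x2|x2|x2⟩|⟨x1,x2|x2|x2⟩|⟨x1,x2,x3⟩|⟨x1,x2|x2|x2⟩ <;>
          rcases hPb with ⟨y1,y2,y3⟩|⟨y1,y2|y2|y2⟩|⟨y1,y2|y2|y2⟩|⟨y1,y2|y2|y2⟩|⟨y1,y2,y3⟩|⟨y1,y2|y2|y2⟩ <;>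
          omega)
  case classB =>
    intro a ha1 ha2
    by_cases c1 : a ≤ 5
    · -- backward path 1
      have e1 : wB k a = (13-a) + 1 := by simp only [wB]; split_ifs <;> first | contradiction | omega
      have e2 : wB k (a+1) = 13-a := by simp only [wB]; split_ifs <;> first | contradiction | omega
      refine ⟨13-a, by omega, Or.inl ⟨ha1, c1, rfl⟩, ?_⟩
      rw [e1, e2, cast_succ i (13-a), hsymm, hc]
    · by_cases c2 : a = 6
      · -- chord H2+ : 8 → 4k+1
        subst c2
        have e1 : wB k 6 = 8 := by simp only [wB]; split_ifs <;> first | contradiction | omega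
        have e2 : wB k (6+1) = 4*k+1 := by simp only [wB]; split_ifs <;> first | contradiction | omega
        rw [e1, e2]
        have hch := h2 (i + ((8 : ℕ) : ZMod (3*n-10)))
        have harg7 : (i + ((8:ℕ) : ZMod (3*n-10))) + ((n-7 : ℕ) : ZMod (3*n-10))
            = i + ((4*k+1 : ℕ) : ZMod (3*n-10)) := by
          rw [add_assoc, ← Nat.cast_add, show 8 + (n-7) = 4*k+1 from by omega]
        have harg6 : (i + ((8:ℕ) : ZMod (3*n-10))) + ((n-6 : ℕ) : ZMod (3*n-10))
            = i + ((4*k+2 : ℕ) : ZMod (3*n-10)) := by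
          rw [add_assoc, ← Nat.cast_add, show 8 + (n-6) = 4*k+2 from by omega]
        have harg5 : (i + ((8:ℕ) : ZMod (3*n-10))) + ((n-5 : ℕ) : ZMod (3*n-10))
            = i + ((4*k+3 : ℕ) : ZMod (3*n-10)) := by
          rw [add_assoc, ← Nat.cast_add, show 8 + (n-5) = 4*k+3 from by omega]
        rw [harg7, harg6, harg5] at hch
        simp only [Set.mem_insert_iff, Set.mem_singleton_iff] at hch
        rcases hch with h | h | h
        · exact ⟨4*k+1, by omega, Or.inr (Or.inl ⟨rfl, Or.inl rfl⟩), h⟩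
        · exact ⟨4*k+2, by omega, Or.inr (Or.inl ⟨rfl, Or.inr (Or.inl rfl)⟩), h⟩
        · exact ⟨4*k+3, by omega, Or.inr (Or.inl ⟨rfl, Or.inr (Or.inr rfl)⟩), h⟩
      · by_cases c3 : a = 7
        · -- chord H2+ : 4k+1 → 8k-6
          subst c3
          have e1 : wB k 7 = 4*k+1 := by simp only [wB]; split_ifs <;> first | contradiction | omega
          have e2 : wB k (7+1) = 8*k-6 := by simp only [wB]; split_ifs <;> first | contradiction | omega
          rw [e1, e2]
          have hch := h2 (i + ((4*k+1 : ℕ) : ZMod (3*n-10)))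
          have harg7 : (i + ((4*k+1:ℕ) : ZMod (3*n-10))) + ((n-7 : ℕ) : ZMod (3*n-10))
              = i + ((8*k-6 : ℕ) : ZMod (3*n-10)) := by
            rw [add_assoc, ← Nat.cast_add, show (4*k+1) + (n-7) = 8*k-6 from by omega]
          have harg6 : (i + ((4*k+1:ℕ) : ZMod (3*n-10))) + ((n-6 : ℕ) : ZMod (3*n-10))
              = i + ((8*k-5 : ℕ) : ZMod (3*n-10)) := by
            rw [add_assoc, ← Nat.cast_add, show (4*k+1) + (n-6) = 8*k-5 from by omega]
          have harg5 : (i + ((4*k+1:ℕ) : ZMod (3*n-10))) + ((n-5 : ℕ) : ZMod (3*n-10))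
              = i + ((8*k-4 : ℕ) : ZMod (3*n-10)) := by
            rw [add_assoc, ← Nat.cast_add, show (4*k+1) + (n-5) = 8*k-4 from by omega]
          rw [harg7, harg6, harg5] at hch
          simp only [Set.mem_insert_iff, Set.mem_singleton_iff] at hch
          rcases hch with h | h | h
          · exact ⟨8*k-6, by omega, Or.inr (Or.inr (Or.inl ⟨rfl, Or.inl rfl⟩)), h⟩
          · exact ⟨8*k-5, by omega, Or.inr (Or.inr (Or.inl ⟨rfl, Or.inr (Or.inl rfl)⟩)), h⟩
          · exact ⟨8*k-4, by omega, Or.inr (Or.inr (Or.inl ⟨rfl, Or.inr (Or.inr rfl)⟩)), h⟩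
        · by_cases c4 : a = 8
          · -- chord H2+ : 8k-6 → 12k-13
            subst c4
            have e1 : wB k 8 = 8*k-6 := by simp only [wB]; split_ifs <;> first | contradiction | omega
            have e2 : wB k (8+1) = 12*k-13 := by simp only [wB]; split_ifs <;> first | contradiction | omega
            rw [e1, e2]
            have hch := h2 (i + ((8*k-6 : ℕ) : ZMod (3*n-10)))
            have harg7 : (i + ((8*k-6:ℕ) : ZMod (3*n-10))) + ((n-7 : ℕ) : ZMod (3*n-10))
                = i + ((12*k-13 : ℕ) : ZMod (3*n-10)) := by
              rw [add_assoc, ← Nat.cast_add, show (8*k-6) + (n-7) = 12*k-13 from by omega]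
            have harg6 : (i + ((8*k-6:ℕ) : ZMod (3*n-10))) + ((n-6 : ℕ) : ZMod (3*n-10))
                = i + ((12*k-12 : ℕ) : ZMod (3*n-10)) := by
              rw [add_assoc, ← Nat.cast_add, show (8*k-6) + (n-6) = 12*k-12 from by omega]
            have harg5 : (i + ((8*k-6:ℕ) : ZMod (3*n-10))) + ((n-5 : ℕ) : ZMod (3*n-10))
                = i + ((12*k-11 : ℕ) : ZMod (3*n-10)) := by
              rw [add_assoc, ← Nat.cast_add, show (8*k-6) + (n-5) = 12*k-11 from by omega]
            rw [harg7, harg6, harg5] at hch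
            simp only [Set.mem_insert_iff, Set.mem_singleton_iff] at hch
            rcases hch with h | h | h
            · exact ⟨12*k-13, by omega, Or.inr (Or.inr (Or.inr (Or.inl ⟨rfl, Or.inl rfl⟩))), h⟩
            · exact ⟨12*k-12, by omega,
                Or.inr (Or.inr (Or.inr (Or.inl ⟨rfl, Or.inr (Or.inl rfl)⟩))), h⟩
            · exact ⟨12*k-11, by omega,
                Or.inr (Or.inr (Or.inr (Or.inl ⟨rfl, Or.inr (Or.inr rfl)⟩))), h⟩
          · by_cases c5 : a ≤ 4*k-2
            · -- backward path 2
              have e1 : wB k a = (12*k-5-a) + 1 := by simp only [wB]; split_ifs <;> first | contradiction | omega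
              have e2 : wB k (a+1) = 12*k-5-a := by simp only [wB]; split_ifs <;> first | contradiction | omega
              refine ⟨12*k-5-a, by omega,
                Or.inr (Or.inr (Or.inr (Or.inr (Or.inl ⟨by omega, c5, rfl⟩)))), ?_⟩
              rw [e1, e2, cast_succ i (12*k-5-a), hsymm, hc]
            · -- final chord H2+ : 8k-3 → 0
              have c6 : a = 4*k-1 := by omega
              subst c6
              have e1 : wB k (4*k-1) = 8*k-3 := by simp only [wB]; split_ifs <;> first | contradiction | omega
              have e2 : wB k (4*k-1+1) = 0 := by simp only [wB]; split_ifs <;> first | contradiction | omega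
              rw [e1, e2]
              have hch := h2 (i + ((8*k-3 : ℕ) : ZMod (3*n-10)))
              have harg7 : (i + ((8*k-3:ℕ) : ZMod (3*n-10))) + ((n-7 : ℕ) : ZMod (3*n-10))
                  = i + ((0 : ℕ) : ZMod (3*n-10)) := by
                rw [add_assoc, ← Nat.cast_add, show (8*k-3) + (n-7) = 3*n-10 from by omega,
                  ZMod.natCast_self, Nat.cast_zero]
              have harg6 : (i + ((8*k-3:ℕ) : ZMod (3*n-10))) + ((n-6 : ℕ) : ZMod (3*n-10))
                  = i + ((1 : ℕ) : ZMod (3*n-10)) := by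
                rw [add_assoc, ← Nat.cast_add, show (8*k-3) + (n-6) = (3*n-10) + 1 from by omega,
                  Nat.cast_add, ZMod.natCast_self, zero_add]
              have harg5 : (i + ((8*k-3:ℕ) : ZMod (3*n-10))) + ((n-5 : ℕ) : ZMod (3*n-10))
                  = i + ((2 : ℕ) : ZMod (3*n-10)) := by
                rw [add_assoc, ← Nat.cast_add, show (8*k-3) + (n-5) = (3*n-10) + 2 from by omega,
                  Nat.cast_add, ZMod.natCast_self, zero_add]
              rw [harg7, harg6, harg5] at hch
              simp only [Set.mem_insert_iff, Set.mem_singleton_iff] at hch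
              rcases hch with h | h | h
              · exact ⟨0, by omega, Or.inr (Or.inr (Or.inr (Or.inr (Or.inr ⟨rfl, Or.inl rfl⟩)))), h⟩
              · exact ⟨1, by omega,
                  Or.inr (Or.inr (Or.inr (Or.inr (Or.inr ⟨rfl, Or.inr (Or.inl rfl)⟩)))), h⟩
              · exact ⟨2, by omega,
                  Or.inr (Or.inr (Or.inr (Or.inr (Or.inr ⟨rfl, Or.inr (Or.inr rfl)⟩)))), h⟩
  -- combine
  obtain ⟨o, holt, ⟨a, ha1, ha2, hPA⟩, hEA⟩ := HA
  obtain ⟨o', holt', ⟨b, hb1, hb2, hPB⟩, hEB⟩ := HB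
  have hcinj : Function.Injective c := by
    have h := hv.2
    have he : (fun j : ZMod (3*n-10) => γ (v j) (v (j+1))) = c := by
      funext x; exact (hc x).symm
    rwa [he] at h
  have hoo : o = o' := by
    have h3 : c (i + (o : ZMod (3*n-10))) = c (i + (o' : ZMod (3*n-10))) := by
      rw [← hEA, ← hEB]
    exact natCast_inj_lt holt holt' (add_left_cancel (hcinj h3))
  subst hoo
  have ho2 : o ≤ 2 := by
    unfold PA at hPA; unfold PB at hPB
    rcases hPA with ⟨x1,x2,x3⟩|⟨x1,x2|x2|x2⟩|⟨x1,x2,x3⟩|⟨x1,x2|x2|x2⟩|⟨x1,x2,x3⟩ <;>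
      rcases hPB with ⟨y1,y2,y3⟩|⟨y1,y2|y2|y2⟩|⟨y1,y2|y2|y2⟩|⟨y1,y2|y2|y2⟩|⟨y1,y2,y3⟩|⟨y1,y2|y2|y2⟩ <;>
      omega
  interval_cases o
  · left; simpa using hEA
  · right; left; simpa using hEA
  · right; right; simpa using hEA
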